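/- arXiv:1907.04022 — 2 statements merged into one kernel-verified Lean document; each statement's English description precedes it below -/
import Mathlib

section
/- Let A ∈ ℝ^(m×n) have full column rank with Moore–Penrose pseudo-inverse G = A⁺, and let a ∈ ℝ^m. Define a⁽²⁾ = a − A G a. If a⁽²⁾ ≠ 0, then the Moore–Penrose pseudo-inverse of the augmented matrix A' = [A a] is G' = [G − d bᵀ ; bᵀ] (stacked as rows), where d = G a and bᵀ = (a⁽²⁾)ᵀ / ((a⁽²⁾)ᵀ a⁽²⁾). -/
open Matrix
/-- `G` is the Moore–Penrose pseudo-inverse of `A` (the four Penrose conditions). -/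
def IsMoorePenrose {m n : ℕ} (A : Matrix (Fin m) (Fin n) ℝ)
    (G : Matrix (Fin n) (Fin m) ℝ) : Prop :=
  A * G * A = A ∧ G * A * G = G ∧ (A * G)ᵀ = A * G ∧ (G * A)ᵀ = G * A

/-- Greville's column-update formula, case `a⁽²⁾ ≠ 0`: if `A` has full column rank with
pseudo-inverse `G`, then the pseudo-inverse of `A' = [A a]` is obtained by stacking the
rows of `G - d bᵀ` with the row `bᵀ`, where `d = G a` and `b = a⁽²⁾ / (a⁽²⁾ᵀ a⁽²⁾)`. -/
theorem stmt10 {m n : ℕ} (A : Matrix (Fin m) (Fin n) ℝ) (G : Matrix (Fin n) (Fin m) ℝ)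
    (hrank : A.rank = n) (hG : IsMoorePenrose A G)
    (a a2 : Fin m → ℝ) (ha2 : a2 = a - A.mulVec (G.mulVec a)) (ha2ne : a2 ≠ 0)
    (d : Fin n → ℝ) (hd : d = G.mulVec a)
    (b : Fin m → ℝ) (hb : b = (a2 ⬝ᵥ a2)⁻¹ • a2) :
    IsMoorePenrose (Matrix.of fun i j => (Fin.snoc (A i) (a i) : Fin (n + 1) → ℝ) j)
      (Matrix.of (Fin.snoc (fun j : Fin n => (G - Matrix.vecMulVec d b) j) b : Fin (n + 1) → Fin m → ℝ)) := by
  obtain ⟨h1, h2, h3, h4⟩ := hG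
  set A' : Matrix (Fin m) (Fin (n + 1)) ℝ :=
    Matrix.of fun i j => (Fin.snoc (A i) (a i) : Fin (n + 1) → ℝ) j with hA'
  set G' : Matrix (Fin (n + 1)) (Fin m) ℝ :=
    Matrix.of (Fin.snoc (fun j : Fin n => (G - Matrix.vecMulVec d b) j) b : Fin (n + 1) → Fin m → ℝ) with hG'
  have hcne : (a2 ⬝ᵥ a2) ≠ 0 := fun h => ha2ne (by simpa [dotProduct_self_eq_zero] using h)
  have hAAG : Aᵀ * (A * G) = Aᵀ := by
    calc Aᵀ * (A * G) = Aᵀ * (A * G)ᵀ := by rw [h3]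
      _ = (A * G * A)ᵀ := by conv_rhs => rw [transpose_mul]
      _ = Aᵀ := by rw [h1]
  have hAta2 : Aᵀ *ᵥ a2 = 0 := by
    rw [ha2, Matrix.mulVec_sub, mulVec_mulVec, mulVec_mulVec, Matrix.mul_assoc, hAAG, sub_self]
  have hAta2' : ∀ j, ∑ i, A i j * a2 i = 0 := by
    intro j
    have := congrFun hAta2 j
    simpa [Matrix.mulVec, dotProduct, transpose_apply] using this
  have ha2a : a2 ⬝ᵥ a = a2 ⬝ᵥ a2 := by
    have ha' : a = a2 + A *ᵥ (G *ᵥ a) := by rw [ha2]; simp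
    rw [ha', dotProduct_add, dotProduct_mulVec, ← Matrix.mulVec_transpose, hAta2]
    simp
  have hba : b ⬝ᵥ a = 1 := by
    rw [hb, smul_dotProduct, smul_eq_mul, ha2a, inv_mul_cancel₀ hcne]
  have hba' : ∑ i, b i * a i = 1 := hba
  have hbA : ∀ j, ∑ i, b i * A i j = 0 := by
    intro j
    rw [hb]
    simp only [Pi.smul_apply, smul_eq_mul, mul_assoc, ← Finset.mul_sum]
    rw [show (∑ i, a2 i * A i j) = ∑ i, A i j * a2 i from Finset.sum_congr rfl fun i _ => mul_comm _ _,
      hAta2' j, mul_zero]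
  have hAGa : ∀ i, ∑ x, (∑ j, A i j * G j x) * a x = a i - a2 i := by
    intro i
    have h := congrFun ha2 i
    have he : (A *ᵥ (G *ᵥ a)) i = ∑ x, (∑ j, A i j * G j x) * a x := by
      rw [mulVec_mulVec]
      simp [Matrix.mulVec, dotProduct, mul_apply]
    simp only [Pi.sub_apply] at h
    rw [← he]
    linarith
  have hGa : ∀ j, ∑ i, G j i * a i = d j := by
    intro j; rw [hd]; simp [Matrix.mulVec, dotProduct]
  have hGAd : ∀ j, ∑ x, (∑ i, G j i * A i x) * d x = d j := by
    intro j
    have : ∑ x, (∑ i, G j i * A i x) * d x = ((G * A) *ᵥ d) j := by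
      simp [Matrix.mulVec, dotProduct, mul_apply]
    rw [this, hd, mulVec_mulVec, h2]
  have hGAG : ∀ j k, ∑ x, (∑ i, G j i * A i x) * G x k = G j k := by
    intro j k
    have := congrFun (congrFun h2 j) k
    simpa [mul_apply] using this
  -- key product 1 : `A' G' = A G + a2 bᵀ`
  have hM : A' * G' = A * G + Matrix.vecMulVec a2 b := by
    ext i k
    simp only [hA', hG', mul_apply, Matrix.add_apply, of_apply, Fin.sum_univ_castSucc, Fin.snoc_castSucc,
      Fin.snoc_last, Matrix.sub_apply, vecMulVec_apply, Matrix.sub_apply]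
    have ha2i : a2 i = a i - ∑ j, A i j * d j := by
      rw [ha2, hd]
      simp only [Pi.sub_apply, Matrix.mulVec, dotProduct, sub_right_inj]
    rw [ha2i]
    simp only [mul_sub, sub_mul, Finset.sum_sub_distrib, mul_assoc]
    simp only [Finset.sum_mul, mul_assoc]
    ring
  -- key product 2 : `G' A'` is block diagonal `[[GA, 0], [0, 1]]`
  have hN : G' * A' = Matrix.of (Fin.snoc (fun j => Fin.snoc ((G * A) j) 0)
      (Fin.snoc (0 : Fin n → ℝ) 1)) := by
    ext j k
    refine Fin.lastCases ?_ (fun j => ?_) j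
    · refine Fin.lastCases ?_ (fun k => ?_) k
      · simpa only [hA', hG', mul_apply, of_apply, Fin.snoc_last] using hba'
      · simpa only [hA', hG', mul_apply, of_apply, Fin.snoc_last, Fin.snoc_castSucc,
          Pi.zero_apply] using hbA k
    · refine Fin.lastCases ?_ (fun k => ?_) k
      · -- row j < n, column last
        simp only [hA', hG', mul_apply, of_apply, Fin.snoc_last, Fin.snoc_castSucc, Matrix.sub_apply,
          vecMulVec_apply, Matrix.sub_apply, Pi.zero_apply]
        simp only [sub_mul, Finset.sum_sub_distrib, mul_assoc]
        rw [hGa j, show (∑ i, d j * (b i * a i)) = d j * ∑ i, b i * a i by rw [Finset.mul_sum],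
          hba', mul_one, sub_self]
      · -- block GA
        simp only [hA', hG', mul_apply, of_apply, Fin.snoc_castSucc, Matrix.sub_apply,
          vecMulVec_apply, Matrix.sub_apply]
        simp only [sub_mul, Finset.sum_sub_distrib, mul_assoc]
        rw [show (∑ i, d j * (b i * A i k)) = d j * ∑ i, b i * A i k by rw [Finset.mul_sum],
          hbA k, mul_zero, sub_zero]
  constructor
  · -- A' G' A' = A'
    rw [hM]
    ext i k
    refine Fin.lastCases ?_ (fun k => ?_) k
    · simp only [hA', mul_apply, Matrix.add_apply, of_apply, Fin.snoc_last, vecMulVec_apply, add_mul,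
        Finset.sum_add_distrib, mul_apply, mul_assoc]
      rw [show (∑ l, a2 i * (b l * a l)) = a2 i * ∑ l, b l * a l by rw [Finset.mul_sum],
        hba', mul_one, hAGa i]
      ring
    · simp only [hA', mul_apply, Matrix.add_apply, of_apply, Fin.snoc_castSucc, vecMulVec_apply, add_mul,
        Finset.sum_add_distrib, mul_apply, mul_assoc]
      rw [show (∑ l, a2 i * (b l * A l k)) = a2 i * ∑ l, b l * A l k by rw [Finset.mul_sum],
        hbA k, mul_zero, add_zero]
      have := congrFun (congrFun h1 i) k
      simpa [mul_apply] using this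
  refine ⟨?_, ?_, ?_⟩
  · -- G' A' G' = G'
    rw [hN]
    ext j k
    refine Fin.lastCases ?_ (fun j => ?_) j
    · simp [mul_apply, Fin.sum_univ_castSucc]
    · simp only [hG', mul_apply, of_apply, Fin.sum_univ_castSucc, Fin.snoc_castSucc, Fin.snoc_last,
        Matrix.sub_apply, vecMulVec_apply, Matrix.sub_apply, Pi.zero_apply, zero_mul, add_zero,
        Finset.sum_const_zero, zero_add, mul_apply]
      simp only [mul_sub, Finset.sum_sub_distrib]
      rw [hGAG j k, show (∑ x, (∑ i, G j i * A i x) * (d x * b k))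
          = (∑ x, (∑ i, G j i * A i x) * d x) * b k by
          rw [Finset.sum_mul]; exact Finset.sum_congr rfl fun l _ => by ring,
        hGAd j]
  · -- symmetry of A' G'
    rw [hM, transpose_add, h3]
    congr 1
    ext i k
    simp only [transpose_apply, vecMulVec_apply, hb, Pi.smul_apply, smul_eq_mul]
    ring
  · -- symmetry of G' A'
    rw [hN]
    ext j k
    refine Fin.lastCases ?_ (fun j => ?_) j
    · refine Fin.lastCases ?_ (fun k => ?_) k
      · rfl
      · simp
    · refine Fin.lastCases ?_ (fun k => ?_) k
      · simp
      · simp only [transpose_apply, of_apply, Fin.snoc_castSucc]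
        have := congrFun (congrFun h4 j) k
        simpa [transpose_apply] using this
end

section
/- Let A ∈ ℝ^(m×n) with pseudo-inverse G = A⁺ and a ∈ ℝ^m with a − A G a = 0 (i.e., a lies in the column space of A). Then with d = G a and bᵀ = (1 + dᵀd)⁻¹ dᵀ G, the matrix G' = [G − d bᵀ ; bᵀ] is the Moore–Penrose pseudo-inverse of A' = [A a]. -/
open Matrix
/-- Greville's column-update formula, case `a - A G a = 0` (the new column lies in the
column space of `A`): with `d = G a` and `bᵀ = (1 + dᵀ d)⁻¹ dᵀ G`, the stacked matrix
`[G - d bᵀ ; bᵀ]` is the pseudo-inverse of `A' = [A a]`. -/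
theorem stmt11 {m n : ℕ} (A : Matrix (Fin m) (Fin n) ℝ) (G : Matrix (Fin n) (Fin m) ℝ)
    (hG : IsMoorePenrose A G)
    (a : Fin m → ℝ) (ha2 : a - A.mulVec (G.mulVec a) = 0)
    (d : Fin n → ℝ) (hd : d = G.mulVec a)
    (b : Fin m → ℝ) (hb : b = (1 + d ⬝ᵥ d)⁻¹ • Matrix.vecMul d G) :
    IsMoorePenrose (Matrix.of fun i j => (Fin.snoc (A i) (a i) : Fin (n + 1) → ℝ) j)
      (Matrix.of (Fin.snoc (fun j : Fin n => (G - Matrix.vecMulVec d b) j) b : Fin (n + 1) → Fin m → ℝ)) := by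
  obtain ⟨h1, h2, h3, h4⟩ := hG
  have hs : (0:ℝ) ≤ d ⬝ᵥ d := by
    simpa [dotProduct] using Finset.sum_nonneg fun i _ => mul_self_nonneg (d i)
  have hne : (1 + d ⬝ᵥ d) ≠ 0 := by linarith
  set β : ℝ := (1 + d ⬝ᵥ d)⁻¹ with hβ
  have hAd : A *ᵥ d = a := by
    rw [hd]; exact (sub_eq_zero.mp ha2).symm
  have hdGA : d ᵥ* (G * A) = d := by
    rw [← h4, vecMul_transpose, ← mulVec_mulVec, hAd, ← hd]
  have hbAG : b ᵥ* (A * G) = b := by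
    rw [hb, smul_vecMul, vecMul_vecMul, ← Matrix.mul_assoc, h2]
  have hbA : b ᵥ* A = β • d := by
    rw [hb, smul_vecMul, vecMul_vecMul, hdGA]
  have hba : b ⬝ᵥ a = β * (d ⬝ᵥ d) := by
    rw [hb, smul_dotProduct, ← dotProduct_mulVec, ← hd, smul_eq_mul]
  have hAGa : (A * G) *ᵥ a = a := by
    rw [← mulVec_mulVec, ← hd, hAd]
  have hβ1 : 1 - b ⬝ᵥ a = β := by
    rw [hba, hβ]
    field_simp
    ring
  set A' : Matrix (Fin m) (Fin (n+1)) ℝ :=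
    Matrix.of fun i j => (Fin.snoc (A i) (a i) : Fin (n + 1) → ℝ) j with hA'def
  set G' : Matrix (Fin (n+1)) (Fin m) ℝ :=
    Matrix.of (Fin.snoc (fun j : Fin n => (G - Matrix.vecMulVec d b) j) b : Fin (n + 1) → Fin m → ℝ) with hG'def
  have hA'c : ∀ i (j : Fin n), A' i j.castSucc = A i j := by
    intro i j; simp [hA'def]
  have hA'l : ∀ i, A' i (Fin.last n) = a i := by
    intro i; simp [hA'def]
  have hG'c : ∀ (j : Fin n) k, G' j.castSucc k = G j k - d j * b k := by
    intro j k; simp [hG'def, Matrix.vecMulVec_apply]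
  have hG'l : ∀ k, G' (Fin.last n) k = b k := by
    intro k; simp [hG'def]
  -- pointwise sum versions of the vector facts
  have hAd' : ∀ i, ∑ j, A i j * d j = a i := fun i => by
    simpa [Matrix.mulVec, dotProduct] using congrFun hAd i
  have hbAG' : ∀ k, ∑ k', b k' * (A * G) k' k = b k := fun k => by
    simpa [Matrix.vecMul, dotProduct] using congrFun hbAG k
  have hG2' : ∀ (p : Fin n) k, ∑ k', G p k' * (A * G) k' k = G p k := fun p k => by
    have h2' : G * (A * G) = G := by rw [← Matrix.mul_assoc, h2]
    simpa [Matrix.mul_apply] using congrFun (congrFun h2' p) k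
  have hbA' : ∀ q, ∑ k, b k * A k q = β * d q := fun q => by
    simpa [Matrix.vecMul, dotProduct] using congrFun hbA q
  have hGa' : ∀ p, ∑ k, G p k * a k = d p := fun p => by
    simpa [Matrix.mulVec, dotProduct] using (congrFun hd p).symm
  have hAGa' : ∀ i, ∑ k, (A * G) i k * a k = a i := fun i => by
    simpa [Matrix.mulVec, dotProduct] using congrFun hAGa i
  have h1' : ∀ i j, ∑ k, (A * G) i k * A k j = A i j := fun i j => by
    simpa [Matrix.mul_apply] using congrFun (congrFun h1 i) j
  -- the key identity A' * G' = A * G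
  have key : A' * G' = A * G := by
    ext i k
    rw [Matrix.mul_apply, Fin.sum_univ_castSucc, Matrix.mul_apply]
    simp only [hA'c, hA'l, hG'c, hG'l]
    have e : ∀ j : Fin n, A i j * (G j k - d j * b k)
        = A i j * G j k - (A i j * d j) * b k := fun j => by ring
    rw [Finset.sum_congr rfl fun j _ => e j, Finset.sum_sub_distrib, ← Finset.sum_mul, hAd' i]
    ring
  refine ⟨?_, ?_, ?_, ?_⟩
  · -- A' * G' * A' = A'
    rw [key]
    ext i j
    induction j using Fin.lastCases with
    | last =>
      rw [Matrix.mul_apply, hA'l]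
      simp only [hA'l]
      exact hAGa' i
    | cast j =>
      rw [Matrix.mul_apply, hA'c]
      calc ∑ k, (A * G) i k * A' k j.castSucc = ∑ k, (A * G) i k * A k j := by
            simp only [hA'c]
        _ = A i j := h1' i j
  · -- G' * A' * G' = G'
    rw [Matrix.mul_assoc, key]
    ext p k
    induction p using Fin.lastCases with
    | last => rw [Matrix.mul_apply, hG'l]; simp only [hG'l]; exact hbAG' k
    | cast p =>
      rw [Matrix.mul_apply, hG'c]
      simp only [hG'c]
      have e : ∀ k' : Fin m, (G p k' - d p * b k') * (A * G) k' k
          = G p k' * (A * G) k' k - d p * (b k' * (A * G) k' k) := fun k' => by ring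
      rw [Finset.sum_congr rfl fun k' _ => e k', Finset.sum_sub_distrib, ← Finset.mul_sum,
        hG2', hbAG']
  · -- (A' * G')ᵀ = A' * G'
    rw [key]; exact h3
  · -- (G' * A')ᵀ = G' * A'
    have v1 : ∀ p q : Fin n, (G' * A') p.castSucc q.castSucc = (G * A) p q - d p * (β * d q) := by
      intro p q
      rw [Matrix.mul_apply]
      have e : ∀ k : Fin m, G' p.castSucc k * A' k q.castSucc
          = G p k * A k q - d p * (b k * A k q) := fun k => by
        rw [hG'c, hA'c]; ring
      rw [Finset.sum_congr rfl fun k _ => e k, Finset.sum_sub_distrib, ← Finset.mul_sum,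
        hbA' q, Matrix.mul_apply]
    have v2 : ∀ p : Fin n, (G' * A') p.castSucc (Fin.last n) = β * d p := by
      intro p
      rw [Matrix.mul_apply]
      have e : ∀ k : Fin m, G' p.castSucc k * A' k (Fin.last n)
          = G p k * a k - d p * (b k * a k) := fun k => by
        rw [hG'c, hA'l]; ring
      rw [Finset.sum_congr rfl fun k _ => e k, Finset.sum_sub_distrib, ← Finset.mul_sum, hGa' p]
      have : ∑ k, b k * a k = b ⬝ᵥ a := rfl
      rw [this]
      calc d p - d p * (b ⬝ᵥ a) = d p * (1 - b ⬝ᵥ a) := by ring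
        _ = β * d p := by rw [hβ1]; ring
    have v3 : ∀ q : Fin n, (G' * A') (Fin.last n) q.castSucc = β * d q := by
      intro q
      rw [Matrix.mul_apply]
      have e : ∀ k : Fin m, G' (Fin.last n) k * A' k q.castSucc = b k * A k q := fun k => by
        rw [hG'l, hA'c]
      rw [Finset.sum_congr rfl fun k _ => e k, hbA' q]
    ext p q
    rw [Matrix.transpose_apply]
    induction p using Fin.lastCases with
    | last =>
      induction q using Fin.lastCases with
      | last => rfl
      | cast q => rw [v3 q, v2 q]
    | cast p =>
      induction q using Fin.lastCases with
      | last => rw [v2 p, v3 p]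
      | cast q =>
        rw [v1 q p, v1 p q]
        have : (G * A) q p = (G * A) p q := congrFun (congrFun h4 p) q
        rw [this]
        ring
end
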